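/- arXiv:0904.4686 — 2 statements merged into one kernel-verified Lean document; each statement's English description precedes it below -/
import Mathlib

section
/- Lemma 1, unweighted product form: let M be a nondeterministic finite automaton over Σ with state set σ, and let x = x₁⋯xₙ ∈ Σ*. Define the product graph U with vertex set {0, 1, …, n} × σ and weighted edges: for each 0 ≤ i < n and state j, an edge (deletion) from (i, j) to (i+1, j) of weight c(x_{i+1}, ε); for each i and each transition of M from j to j' on symbol b ∈ Σ, an edge (insertion) from (i, j) to (i, j') of weight c(ε, b); and for each 0 ≤ i < n and each transition of M from j to j' on symbol b, an edge (substitution/match) from (i, j) to (i+1, j') of weight c(x_{i+1}, b). Then the infimum, over all directed walks in U from a vertex (0, j₀) with j₀ an initial state of M to a vertex (n, j_f) with j_f an accepting state of M, of the sum of the edge weights along the walk, equals the edit distance d(x, L(M)) = inf_{y ∈ L(M)} d(x, y) (both sides taken in [0, ∞]). -/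
open scoped ENNReal NNReal

/-- An edit operation over alphabet `α`: a pair in `(Σ ∪ {ε}) × (Σ ∪ {ε})`,
where `none` plays the role of `ε`.  The pair `(none, none)` is excluded
from `Ω` via the validity condition in `IsAlignment`. -/
abbrev EditOp (α : Type*) := Option α × Option α

/-- `ω` is an alignment between `x` and `y`: every letter of `ω` lies in
`Ω = (Σ ∪ {ε}) × (Σ ∪ {ε}) − {(ε,ε)}`, and the natural morphism `h`
(erasing `ε`'s componentwise) sends `ω` to `(x, y)`. -/
def IsAlignment {α : Type*} (ω : List (EditOp α)) (x y : List α) : Prop :=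
  (∀ p ∈ ω, p ≠ (none, none)) ∧
    ω.filterMap Prod.fst = x ∧ ω.filterMap Prod.snd = y

/-- The cost `c(ω) = Σᵢ c(ωᵢ)` of an alignment. -/
def alignCost {α : Type*} (c : EditOp α → ℝ≥0) (ω : List (EditOp α)) : ℝ≥0 :=
  (ω.map c).sum

/-- The edit-distance `d(x, y)`: the minimal cost of an alignment between
`x` and `y`. -/
noncomputable def editDist {α : Type*} (c : EditOp α → ℝ≥0) (x y : List α) : ℝ≥0 :=
  sInf {r : ℝ≥0 | ∃ ω : List (EditOp α), IsAlignment ω x y ∧ alignCost c ω = r}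

/-- The edit distance `d(x, L) = inf_{y ∈ L} d(x, y)` between a string and a
language, taken in `[0, ∞]` (so `d(x, ∅) = ∞`). -/
noncomputable def langDist {α : Type*} (c : EditOp α → ℝ≥0) (x : List α)
    (L : Set (List α)) : ℝ≥0∞ :=
  ⨅ y ∈ L, (editDist c x y : ℝ≥0∞)

/-- The weight of the walk `u, v₀, v₁, …` : the sum of the weights of its
consecutive edges (an empty walk has weight `0`). -/
noncomputable def walkWeight {V : Type*} (w : V → V → ℝ≥0∞) : V → List V → ℝ≥0∞
  | _, [] => 0
  | u, v :: vs => w u v + walkWeight w v vs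

/-- Edge weights of the product graph `U` of the string `x` and the NFA `M`:
from `(i, j)` to `(i+1, j)` a deletion edge of weight `c(x_{i+1}, ε)`; from
`(i, j)` to `(i, j')` an insertion edge of weight `c(ε, b)` for each
transition of `M` from `j` to `j'` on `b`; and from `(i, j)` to `(i+1, j')` a
substitution/match edge of weight `c(x_{i+1}, b)` for each such transition.
Parallel edges are merged by taking the infimum of their weights; absence of
any edge gives weight `∞`. -/
noncomputable def nfaEdgeWeight {α σ : Type*} (M : NFA α σ)
    (c : EditOp α → ℝ≥0) (x : List α) (p q : ℕ × σ) : ℝ≥0∞ :=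
  sInf
    ({t | ∃ hi : p.1 < x.length, q.1 = p.1 + 1 ∧ q.2 = p.2 ∧
        t = (c (some (x.get ⟨p.1, hi⟩), none) : ℝ≥0∞)} ∪
     {t | ∃ b : α, q.1 = p.1 ∧ q.2 ∈ M.step p.2 b ∧
        t = (c (none, some b) : ℝ≥0∞)} ∪
     {t | ∃ (b : α) (hi : p.1 < x.length), q.1 = p.1 + 1 ∧ q.2 ∈ M.step p.2 b ∧
        t = (c (some (x.get ⟨p.1, hi⟩), some b) : ℝ≥0∞)})

section Aux

variable {α σ : Type*} (M : NFA α σ)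

lemma mem_evalFrom_iff' (S : Set σ) (y : List α) (jf : σ) :
    jf ∈ M.evalFrom S y ↔ ∃ j ∈ S, jf ∈ M.evalFrom {j} y := by
  induction y generalizing S with
  | nil => simp [NFA.evalFrom]
  | cons b y ih =>
    rw [show M.evalFrom S (b :: y) = M.evalFrom (M.stepSet S b) y from rfl, ih]
    constructor
    · rintro ⟨j', hj', h⟩
      rw [NFA.mem_stepSet] at hj'
      obtain ⟨j, hj, hstep⟩ := hj'
      refine ⟨j, hj, ?_⟩
      rw [show M.evalFrom {j} (b :: y) = M.evalFrom (M.stepSet {j} b) y from rfl, ih]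
      exact ⟨j', by simp [NFA.mem_stepSet, hstep], h⟩
    · rintro ⟨j, hj, h⟩
      rw [show M.evalFrom {j} (b :: y) = M.evalFrom (M.stepSet {j} b) y from rfl, ih] at h
      obtain ⟨j', hj', h⟩ := h
      refine ⟨j', (NFA.mem_stepSet ..).2 ⟨j, hj, ?_⟩, h⟩
      simpa [NFA.mem_stepSet] using hj'

lemma mem_evalFrom_cons' {j jf : σ} {b : α} {y : List α} :
    jf ∈ M.evalFrom {j} (b :: y) ↔ ∃ j', j' ∈ M.step j b ∧ jf ∈ M.evalFrom {j'} y := by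
  rw [show M.evalFrom {j} (b :: y) = M.evalFrom (M.stepSet {j} b) y from rfl,
    mem_evalFrom_iff']
  simp [NFA.mem_stepSet]

lemma alignment_exists (x y : List α) :
    ∃ ω : List (EditOp α), IsAlignment ω x y := by
  refine ⟨x.map (fun a => (some a, none)) ++ y.map (fun b => (none, some b)), ?_, ?_, ?_⟩
  · intro p hp
    simp only [List.mem_append, List.mem_map] at hp
    rcases hp with ⟨a, _, rfl⟩ | ⟨b, _, rfl⟩ <;> simp
  · simp [List.filterMap_append, List.filterMap_map, Function.comp_def]
  · simp [List.filterMap_append, List.filterMap_map, Function.comp_def]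

end Aux

section EdgeBounds

open scoped ENNReal NNReal

variable {α σ : Type*} (M : NFA α σ) (c : EditOp α → ℝ≥0) (x : List α)

lemma edge_del {i : ℕ} (j : σ) (hi : i < x.length) :
    nfaEdgeWeight M c x (i, j) (i + 1, j) ≤ (c (some (x.get ⟨i, hi⟩), none) : ℝ≥0∞) :=
  sInf_le (Or.inl (Or.inl ⟨hi, rfl, rfl, rfl⟩))

lemma edge_ins {i : ℕ} {j j' : σ} {b : α} (hstep : j' ∈ M.step j b) :
    nfaEdgeWeight M c x (i, j) (i, j') ≤ (c (none, some b) : ℝ≥0∞) :=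
  sInf_le (Or.inl (Or.inr ⟨b, rfl, hstep, rfl⟩))

lemma edge_sub {i : ℕ} {j j' : σ} {b : α} (hi : i < x.length) (hstep : j' ∈ M.step j b) :
    nfaEdgeWeight M c x (i, j) (i + 1, j') ≤ (c (some (x.get ⟨i, hi⟩), some b) : ℝ≥0∞) :=
  sInf_le (Or.inr ⟨b, hi, rfl, hstep, rfl⟩)

end EdgeBounds

section MainLemmas

open scoped ENNReal NNReal

variable {α σ : Type*} (M : NFA α σ) (c : EditOp α → ℝ≥0) (x : List α)

lemma alignCost_cons (op : EditOp α) (ω : List (EditOp α)) :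
    alignCost c (op :: ω) = c op + alignCost c ω := by
  simp [alignCost]

lemma walk_of_alignment :
    ∀ (ω : List (EditOp α)) (i : ℕ) (j jf : σ) (y : List α),
      i ≤ x.length → IsAlignment ω (x.drop i) y → jf ∈ M.evalFrom {j} y →
      ∃ vs : List (ℕ × σ),
        (((i, j) :: vs).getLast (List.cons_ne_nil _ _)) = (x.length, jf) ∧
        walkWeight (nfaEdgeWeight M c x) (i, j) vs ≤ (alignCost c ω : ℝ≥0∞) := by
  intro ω
  induction ω with
  | nil =>
    rintro i j jf y hi ⟨hv, hfst, hsnd⟩ hev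
    simp only [List.filterMap_nil] at hfst hsnd
    have hix : i = x.length := le_antisymm hi (List.drop_eq_nil_iff.mp hfst.symm)
    subst hsnd
    rw [NFA.evalFrom_nil, Set.mem_singleton_iff] at hev
    exact ⟨[], by simp [hix, hev], by simp [walkWeight, alignCost]⟩
  | cons op ω ih =>
    rintro i j jf y hi ⟨hv, hfst, hsnd⟩ hev
    obtain ⟨oa, ob⟩ := op
    have hvtail : ∀ p ∈ ω, p ≠ (none, none) := fun p hp => hv p (List.mem_cons_of_mem _ hp)
    match oa, ob with
    | none, none => exact absurd rfl (hv _ List.mem_cons_self)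
    | some a, none =>
      rw [List.filterMap_cons] at hfst hsnd
      simp only at hfst hsnd
      have hlt : i < x.length := by
        by_contra h
        rw [List.drop_eq_nil_of_le (le_of_not_gt h)] at hfst
        exact List.cons_ne_nil _ _ hfst
      rw [List.drop_eq_getElem_cons hlt] at hfst
      obtain ⟨ha, htail⟩ := List.cons.inj hfst
      obtain ⟨vs, hlast, hw⟩ := ih (i + 1) j jf y hlt ⟨hvtail, htail, hsnd⟩ hev
      refine ⟨(i + 1, j) :: vs, ?_, ?_⟩
      · rwa [List.getLast_cons (List.cons_ne_nil _ _)]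
      · rw [walkWeight, alignCost_cons, ENNReal.coe_add]
        refine add_le_add ?_ hw
        rw [ha]
        simpa [List.get_eq_getElem] using edge_del M c x j hlt
    | none, some b =>
      rw [List.filterMap_cons] at hfst hsnd
      simp only at hfst hsnd
      subst hsnd
      rw [mem_evalFrom_cons'] at hev
      obtain ⟨j', hstep, hev⟩ := hev
      obtain ⟨vs, hlast, hw⟩ := ih i j' jf _ hi ⟨hvtail, hfst, rfl⟩ hev
      refine ⟨(i, j') :: vs, ?_, ?_⟩
      · rwa [List.getLast_cons (List.cons_ne_nil _ _)]
      · rw [walkWeight, alignCost_cons, ENNReal.coe_add]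
        exact add_le_add (edge_ins M c x hstep) hw
    | some a, some b =>
      rw [List.filterMap_cons] at hfst hsnd
      simp only at hfst hsnd
      subst hsnd
      have hlt : i < x.length := by
        by_contra h
        rw [List.drop_eq_nil_of_le (le_of_not_gt h)] at hfst
        exact List.cons_ne_nil _ _ hfst
      rw [List.drop_eq_getElem_cons hlt] at hfst
      obtain ⟨ha, htail⟩ := List.cons.inj hfst
      rw [mem_evalFrom_cons'] at hev
      obtain ⟨j', hstep, hev⟩ := hev
      obtain ⟨vs, hlast, hw⟩ := ih (i + 1) j' jf _ hlt ⟨hvtail, htail, rfl⟩ hev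
      refine ⟨(i + 1, j') :: vs, ?_, ?_⟩
      · rwa [List.getLast_cons (List.cons_ne_nil _ _)]
      · rw [walkWeight, alignCost_cons, ENNReal.coe_add]
        refine add_le_add ?_ hw
        rw [ha]
        simpa [List.get_eq_getElem] using edge_sub M c x hlt hstep

lemma alignment_of_walk [Fintype α] :
    ∀ (vs : List (ℕ × σ)) (i : ℕ) (j : σ),
      (((i, j) :: vs).getLast (List.cons_ne_nil _ _)).1 = x.length →
      walkWeight (nfaEdgeWeight M c x) (i, j) vs ≠ ⊤ →
      ∃ (y : List α) (ω : List (EditOp α)),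
        IsAlignment ω (x.drop i) y ∧
        (((i, j) :: vs).getLast (List.cons_ne_nil _ _)).2 ∈ M.evalFrom {j} y ∧
        (alignCost c ω : ℝ≥0∞) ≤ walkWeight (nfaEdgeWeight M c x) (i, j) vs := by
  intro vs
  induction vs with
  | nil =>
    intro i j hlen _
    simp only [List.getLast_singleton] at hlen ⊢
    exact ⟨[], [], ⟨by simp, by simp [hlen, List.drop_length], by simp⟩,
      by simp [NFA.evalFrom_nil], by simp [alignCost, walkWeight]⟩
  | cons q vs ih =>
    intro i j hlen hne
    rw [walkWeight] at hne ⊢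
    have hedge : nfaEdgeWeight M c x (i, j) q ≠ ⊤ := fun h => hne (by simp [h])
    have hrest : walkWeight (nfaEdgeWeight M c x) q vs ≠ ⊤ := fun h => hne (by simp [h])
    -- the defining set of the edge weight is finite and nonempty
    have hSfin : ({t | ∃ hi : i < x.length, q.1 = i + 1 ∧ q.2 = j ∧
          t = (c (some (x.get ⟨i, hi⟩), none) : ℝ≥0∞)} ∪
        {t | ∃ b : α, q.1 = i ∧ q.2 ∈ M.step j b ∧
          t = (c (none, some b) : ℝ≥0∞)} ∪
        {t | ∃ (b : α) (hi : i < x.length), q.1 = i + 1 ∧ q.2 ∈ M.step j b ∧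
          t = (c (some (x.get ⟨i, hi⟩), some b) : ℝ≥0∞)}).Finite := by
      apply Set.Finite.subset (Set.finite_range (fun op : EditOp α => (c op : ℝ≥0∞)))
      rintro t ((⟨hi, _, _, rfl⟩ | ⟨b, _, _, rfl⟩) | ⟨b, hi, _, _, rfl⟩)
      · exact ⟨(some (x.get ⟨i, hi⟩), none), rfl⟩
      · exact ⟨(none, some b), rfl⟩
      · exact ⟨(some (x.get ⟨i, hi⟩), some b), rfl⟩
    have hSne : ({t | ∃ hi : i < x.length, q.1 = i + 1 ∧ q.2 = j ∧
          t = (c (some (x.get ⟨i, hi⟩), none) : ℝ≥0∞)} ∪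
        {t | ∃ b : α, q.1 = i ∧ q.2 ∈ M.step j b ∧
          t = (c (none, some b) : ℝ≥0∞)} ∪
        {t | ∃ (b : α) (hi : i < x.length), q.1 = i + 1 ∧ q.2 ∈ M.step j b ∧
          t = (c (some (x.get ⟨i, hi⟩), some b) : ℝ≥0∞)}).Nonempty := by
      rw [Set.nonempty_iff_ne_empty]
      intro h
      exact hedge (by simp only [nfaEdgeWeight, h, sInf_empty])
    have hmem := Set.Nonempty.csInf_mem hSne hSfin
    have hlen' : ((q :: vs).getLast (List.cons_ne_nil _ _)).1 = x.length := by
      rwa [List.getLast_cons (List.cons_ne_nil _ _)] at hlen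
    rcases hmem with (⟨hi, hq1, hq2, hc⟩ | ⟨b, hq1, hq2, hc⟩) | ⟨b, hi, hq1, hq2, hc⟩
    · -- deletion edge
      obtain ⟨qi, qj⟩ := q
      simp only at hq1 hq2
      subst hq1; subst hq2
      obtain ⟨y, ω, ⟨hval, hfst, hsnd⟩, hev, hcost⟩ := ih (i + 1) qj hlen' hrest
      refine ⟨y, (some (x.get ⟨i, hi⟩), none) :: ω, ⟨?_, ?_, ?_⟩, ?_, ?_⟩
      · rintro p hp
        rcases List.mem_cons.mp hp with rfl | hp
        · simp
        · exact hval p hp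
      · rw [List.filterMap_cons]
        simp only [List.get_eq_getElem]
        rw [hfst]
        exact (List.drop_eq_getElem_cons hi).symm
      · rw [List.filterMap_cons]; simpa using hsnd
      · rwa [List.getLast_cons (List.cons_ne_nil _ _)]
      · rw [alignCost_cons, ENNReal.coe_add]
        exact add_le_add (le_of_eq hc.symm) hcost
    · -- insertion edge
      obtain ⟨qi, qj⟩ := q
      simp only at hq1 hq2
      subst hq1
      obtain ⟨y, ω, ⟨hval, hfst, hsnd⟩, hev, hcost⟩ := ih qi qj hlen' hrest
      refine ⟨b :: y, (none, some b) :: ω, ⟨?_, ?_, ?_⟩, ?_, ?_⟩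
      · rintro p hp
        rcases List.mem_cons.mp hp with rfl | hp
        · simp
        · exact hval p hp
      · rw [List.filterMap_cons]; simpa using hfst
      · rw [List.filterMap_cons]; simpa using hsnd
      · rw [List.getLast_cons (List.cons_ne_nil _ _)] at hlen ⊢
        rw [mem_evalFrom_cons']
        exact ⟨qj, hq2, hev⟩
      · rw [alignCost_cons, ENNReal.coe_add]
        exact add_le_add (le_of_eq hc.symm) hcost
    · -- substitution edge
      obtain ⟨qi, qj⟩ := q
      simp only at hq1 hq2
      subst hq1
      obtain ⟨y, ω, ⟨hval, hfst, hsnd⟩, hev, hcost⟩ := ih (i + 1) qj hlen' hrest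
      refine ⟨b :: y, (some (x.get ⟨i, hi⟩), some b) :: ω, ⟨?_, ?_, ?_⟩, ?_, ?_⟩
      · rintro p hp
        rcases List.mem_cons.mp hp with rfl | hp
        · simp
        · exact hval p hp
      · rw [List.filterMap_cons]
        simp only [List.get_eq_getElem]
        rw [hfst]
        exact (List.drop_eq_getElem_cons hi).symm
      · rw [List.filterMap_cons]; simpa using hsnd
      · rw [List.getLast_cons (List.cons_ne_nil _ _)]
        rw [mem_evalFrom_cons']
        exact ⟨qj, hq2, hev⟩
      · rw [alignCost_cons, ENNReal.coe_add]
        exact add_le_add (le_of_eq hc.symm) hcost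

end MainLemmas

/-- Lemma 1, unweighted product form: the infimum over all
directed walks in the product graph `U` from an initial vertex `(0, j₀)`,
`j₀ ∈ I`, to a vertex `(n, j_f)`, `j_f` accepting, of the total edge weight,
equals the edit distance `d(x, L(M))` (both sides in `[0, ∞]`). -/
theorem nfa_product_shortest_eq_editDist {α σ : Type*} [Fintype α] [Fintype σ]
    (M : NFA α σ) (c : EditOp α → ℝ≥0) (x : List α) :
    (⨅ (j₀ : σ) (_ : j₀ ∈ M.start) (vs : List (ℕ × σ))
        (_ : (((0, j₀) :: vs).getLast (List.cons_ne_nil _ _)).1 = x.length ∧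
             (((0, j₀) :: vs).getLast (List.cons_ne_nil _ _)).2 ∈ M.accept),
        walkWeight (nfaEdgeWeight M c x) (0, j₀) vs)
    = langDist c x M.accepts := by
  apply le_antisymm
  · -- walks infimum ≤ langDist
    unfold langDist
    refine le_iInf₂ fun y hy => ?_
    replace hy := NFA.mem_accepts.1 hy
    obtain ⟨jf, hjf, hev⟩ := hy
    rw [mem_evalFrom_iff'] at hev
    obtain ⟨j₀, hj₀, hev⟩ := hev
    obtain ⟨ω₀, hω₀⟩ := alignment_exists x y
    have hne : {r : ℝ≥0 | ∃ ω : List (EditOp α), IsAlignment ω x y ∧ alignCost c ω = r}.Nonempty :=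
      ⟨alignCost c ω₀, ω₀, hω₀, rfl⟩
    rw [editDist, ENNReal.coe_sInf hne]
    refine le_iInf₂ fun r hr => ?_
    obtain ⟨ω, hω, rfl⟩ := hr
    obtain ⟨vs, hlast, hw⟩ := walk_of_alignment M c x ω 0 j₀ jf y (Nat.zero_le _)
      (by rwa [List.drop_zero]) hev
    refine le_trans ?_ hw
    exact iInf_le_of_le j₀ (iInf_le_of_le hj₀ (iInf_le_of_le vs
      (iInf_le _ ⟨by rw [hlast], by rw [hlast]; exact hjf⟩)))
  · -- langDist ≤ walks infimum
    refine le_iInf fun j₀ => le_iInf fun hj₀ => le_iInf fun vs => le_iInf fun hcond => ?_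
    obtain ⟨hlen, hacc⟩ := hcond
    by_cases htop : walkWeight (nfaEdgeWeight M c x) (0, j₀) vs = ⊤
    · rw [htop]; exact le_top
    obtain ⟨y, ω, hal, hev, hcost⟩ := alignment_of_walk M c x vs 0 j₀ hlen htop
    have hy : y ∈ M.accepts := by
      rw [NFA.mem_accepts]
      exact ⟨_, hacc, (mem_evalFrom_iff' M M.start y _).2 ⟨j₀, hj₀, hev⟩⟩
    calc langDist c x M.accepts ≤ (editDist c x y : ℝ≥0∞) := by
          unfold langDist; exact iInf₂_le y hy
      _ ≤ (alignCost c ω : ℝ≥0∞) := by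
          apply ENNReal.coe_le_coe.2
          exact csInf_le' ⟨ω, by rwa [List.drop_zero] at hal, rfl⟩
      _ ≤ _ := hcost
end

section
/- Midpoint decomposition (content of the midpoint lemma): let M be a nondeterministic finite automaton over Σ with state set σ. For all strings x¹, x² ∈ Σ*, d(x¹x², L(M)) = inf over states q ∈ σ of ( d(x¹, L₁(q)) + d(x², L₂(q)) ), where L₁(q) is the set of strings y such that M can reach state q from some initial state reading y, L₂(q) is the set of strings y such that M can reach some accepting state from q reading y, d(x, L) = inf_{y ∈ L} d(x, y), and all infima are taken in [0, ∞] (with the infimum over the empty set equal to ∞). -/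
open scoped ENNReal NNReal

section Aux
variable {α : Type*}

lemma align_exists (x y : List α) :
    IsAlignment ((x.map fun a => ((some a, none) : EditOp α)) ++
      (y.map fun b => ((none, some b) : EditOp α))) x y := by
  refine ⟨?_, ?_, ?_⟩
  · intro p hp
    rcases List.mem_append.1 hp with h | h <;>
      simp only [List.mem_map] at h <;> rcases h with ⟨a, _, rfl⟩ <;> simp
  · simp [List.filterMap_append, List.filterMap_map, Function.comp_def]
  · simp [List.filterMap_append, List.filterMap_map, Function.comp_def]

lemma align_append {ω₁ ω₂ : List (EditOp α)} {x₁ x₂ y₁ y₂ : List α}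
    (h₁ : IsAlignment ω₁ x₁ y₁) (h₂ : IsAlignment ω₂ x₂ y₂) :
    IsAlignment (ω₁ ++ ω₂) (x₁ ++ x₂) (y₁ ++ y₂) := by
  obtain ⟨v₁, f₁, s₁⟩ := h₁
  obtain ⟨v₂, f₂, s₂⟩ := h₂
  refine ⟨fun p hp => ?_, ?_, ?_⟩
  · rcases List.mem_append.1 hp with h | h
    exacts [v₁ p h, v₂ p h]
  · rw [List.filterMap_append, f₁, f₂]
  · rw [List.filterMap_append, s₁, s₂]

lemma alignCost_append (c : EditOp α → ℝ≥0) (ω₁ ω₂ : List (EditOp α)) :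
    alignCost c (ω₁ ++ ω₂) = alignCost c ω₁ + alignCost c ω₂ := by
  simp [alignCost]

lemma filterMap_split {β γ : Type*} (f : β → Option γ) :
    ∀ (l : List β) (a₁ a₂ : List γ), l.filterMap f = a₁ ++ a₂ →
      ∃ l₁ l₂, l = l₁ ++ l₂ ∧ l₁.filterMap f = a₁ ∧ l₂.filterMap f = a₂ := by
  intro l
  induction l with
  | nil =>
    intro a₁ a₂ h
    rcases List.append_eq_nil_iff.1 h.symm with ⟨rfl, rfl⟩
    exact ⟨[], [], by simp⟩
  | cons b l ih =>
    intro a₁ a₂ h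
    rcases hb : f b with _ | cc
    · rw [List.filterMap_cons, hb] at h
      obtain ⟨l₁, l₂, rfl, h₁, h₂⟩ := ih a₁ a₂ h
      exact ⟨b :: l₁, l₂, by simp [List.filterMap_cons, hb, h₁, h₂]⟩
    · rw [List.filterMap_cons, hb] at h
      cases a₁ with
      | nil => exact ⟨[], b :: l, by simpa [List.filterMap_cons, hb] using h⟩
      | cons c' a₁ =>
        simp only [List.cons_append, List.cons.injEq] at h
        obtain ⟨rfl, h'⟩ := h
        obtain ⟨l₁, l₂, rfl, h₁, h₂⟩ := ih a₁ a₂ h'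
        exact ⟨b :: l₁, l₂, by simp [List.filterMap_cons, hb, h₁, h₂]⟩

lemma editDist_coe (c : EditOp α → ℝ≥0) (x y : List α) :
    (editDist c x y : ℝ≥0∞) =
      ⨅ ω ∈ {ω : List (EditOp α) | IsAlignment ω x y}, (alignCost c ω : ℝ≥0∞) := by
  have hS : {r : ℝ≥0 | ∃ ω : List (EditOp α), IsAlignment ω x y ∧ alignCost c ω = r} =
      alignCost c '' {ω | IsAlignment ω x y} := by
    ext r; simp [Set.mem_image, eq_comm]
  have hne : ({r : ℝ≥0 | ∃ ω, IsAlignment ω x y ∧ alignCost c ω = r}).Nonempty :=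
    ⟨_, _, align_exists x y, rfl⟩
  rw [editDist, ENNReal.coe_sInf hne, hS, iInf_image]

lemma editDist_le_alignCost {c : EditOp α → ℝ≥0} {ω : List (EditOp α)} {x y : List α}
    (h : IsAlignment ω x y) : editDist c x y ≤ alignCost c ω :=
  csInf_le (OrderBot.bddBelow _) ⟨ω, h, rfl⟩

lemma editDist_append_le (c : EditOp α → ℝ≥0) (x₁ x₂ y₁ y₂ : List α) :
    (editDist c (x₁ ++ x₂) (y₁ ++ y₂) : ℝ≥0∞) ≤
      (editDist c x₁ y₁ : ℝ≥0∞) + editDist c x₂ y₂ := by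
  rw [editDist_coe c x₁ y₁, editDist_coe c x₂ y₂]
  simp only [ENNReal.iInf_add, ENNReal.add_iInf]
  refine le_iInf₂ fun ω₂ h₂ => le_iInf₂ fun ω₁ h₁ => ?_
  calc (editDist c (x₁ ++ x₂) (y₁ ++ y₂) : ℝ≥0∞)
      ≤ (alignCost c (ω₁ ++ ω₂) : ℝ≥0∞) :=
        ENNReal.coe_le_coe.2 (editDist_le_alignCost (align_append h₁ h₂))
    _ = _ := by rw [alignCost_append]; push_cast; ring

variable {σ : Type*}

lemma evalFrom_append' (M : NFA α σ) (S : Set σ) (y₁ y₂ : List α) :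
    M.evalFrom S (y₁ ++ y₂) = M.evalFrom (M.evalFrom S y₁) y₂ := by
  simp [NFA.evalFrom, List.foldl_append]

lemma evalFrom_mono (M : NFA α σ) {S T : Set σ} (h : S ⊆ T) :
    ∀ y, M.evalFrom S y ⊆ M.evalFrom T y := by
  intro y
  induction y generalizing S T with
  | nil => simpa using h
  | cons a y ih =>
    have : M.stepSet S a ⊆ M.stepSet T a := by
      intro s hs
      rw [NFA.mem_stepSet] at hs ⊢
      obtain ⟨t, ht, hst⟩ := hs
      exact ⟨t, h ht, hst⟩
    simpa [NFA.evalFrom] using ih this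

lemma evalFrom_split (M : NFA α σ) {S : Set σ} {f : σ} :
    ∀ y, f ∈ M.evalFrom S y → ∃ q ∈ S, f ∈ M.evalFrom {q} y := by
  intro y
  induction y generalizing S with
  | nil => intro h; exact ⟨f, by simpa using h, by simp⟩
  | cons a y ih =>
    intro h
    have h' : f ∈ M.evalFrom (M.stepSet S a) y := by simpa [NFA.evalFrom] using h
    obtain ⟨q', hq', hf⟩ := ih h'
    rw [NFA.mem_stepSet] at hq'
    obtain ⟨q, hq, hq'step⟩ := hq'
    refine ⟨q, hq, ?_⟩
    have hsub : ({q'} : Set σ) ⊆ M.stepSet {q} a := by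
      intro s hs
      rw [Set.mem_singleton_iff] at hs; subst hs
      rw [NFA.mem_stepSet]; exact ⟨q, rfl, hq'step⟩
    have := evalFrom_mono M hsub y hf
    simpa [NFA.evalFrom] using this

end Aux

/-- midpoint decomposition: for all strings `x¹, x²`,
`d(x¹x², L(M)) = inf_{q ∈ σ} ( d(x¹, L₁(q)) + d(x², L₂(q)) )`, where
`L₁(q)` is the set of strings by which `M` can reach `q` from an initial
state and `L₂(q)` the set of strings by which `M` can reach an accepting
state from `q`; all infima are taken in `[0, ∞]`. -/
theorem langDist_midpoint {α σ : Type*} [Fintype α] [Fintype σ]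
    (M : NFA α σ) (c : EditOp α → ℝ≥0) (x₁ x₂ : List α) :
    langDist c (x₁ ++ x₂) M.accepts =
      ⨅ q : σ,
        (langDist c x₁ {y : List α | q ∈ M.eval y} +
         langDist c x₂ {y : List α | ∃ f ∈ M.accept, f ∈ M.evalFrom {q} y}) := by
  refine le_antisymm (le_iInf fun q => ?_) ?_
  · -- LHS ≤ term at q
    have hrw : langDist c x₁ {y : List α | q ∈ M.eval y} +
        langDist c x₂ {y : List α | ∃ f ∈ M.accept, f ∈ M.evalFrom {q} y} =
        ⨅ y₂ ∈ {y : List α | ∃ f ∈ M.accept, f ∈ M.evalFrom {q} y},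
          ⨅ y₁ ∈ {y : List α | q ∈ M.eval y},
            ((editDist c x₁ y₁ : ℝ≥0∞) + editDist c x₂ y₂) := by
      rw [langDist, langDist]
      simp only [ENNReal.iInf_add, ENNReal.add_iInf]
    rw [hrw]
    refine le_iInf₂ fun y₂ hy₂ => le_iInf₂ fun y₁ hy₁ => ?_
    obtain ⟨f, hfacc, hf⟩ := hy₂
    have hy : (y₁ ++ y₂) ∈ M.accepts := by
      refine ⟨f, hfacc, ?_⟩
      show f ∈ M.evalFrom M.start (y₁ ++ y₂)
      rw [evalFrom_append' M M.start y₁ y₂]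
      exact evalFrom_mono M (Set.singleton_subset_iff.2 hy₁) y₂ hf
    calc langDist c (x₁ ++ x₂) M.accepts
        ≤ (editDist c (x₁ ++ x₂) (y₁ ++ y₂) : ℝ≥0∞) := biInf_le _ hy
      _ ≤ _ := editDist_append_le c x₁ x₂ y₁ y₂
  · -- RHS ≤ LHS
    rw [langDist.eq_1 c (x₁ ++ x₂) M.accepts]
    refine le_iInf₂ fun y hy => ?_
    rw [editDist_coe]
    refine le_iInf₂ fun ω hω => ?_
    obtain ⟨hω_valid, hω_fst, hω_snd⟩ := hω
    obtain ⟨ω₁, ω₂, rfl, h₁, h₂⟩ := filterMap_split Prod.fst ω x₁ x₂ hω_fst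
    set y₁ := ω₁.filterMap Prod.snd with hy₁def
    set y₂ := ω₂.filterMap Prod.snd with hy₂def
    have hysplit : y = y₁ ++ y₂ := by rw [← hω_snd, List.filterMap_append]
    have hA₁ : IsAlignment ω₁ x₁ y₁ :=
      ⟨fun p hp => hω_valid p (List.mem_append.2 (Or.inl hp)), h₁, rfl⟩
    have hA₂ : IsAlignment ω₂ x₂ y₂ :=
      ⟨fun p hp => hω_valid p (List.mem_append.2 (Or.inr hp)), h₂, rfl⟩
    obtain ⟨f, hfacc, hf⟩ := hy
    rw [hysplit] at hf
    rw [show f ∈ M.eval (y₁ ++ y₂) ↔ f ∈ M.evalFrom (M.eval y₁) y₂ from by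
      rw [NFA.eval, evalFrom_append']] at hf
    obtain ⟨q, hq, hfq⟩ := evalFrom_split M y₂ hf
    refine (iInf_le _ q).trans ?_
    have hle₁ : langDist c x₁ {y | q ∈ M.eval y} ≤ (editDist c x₁ y₁ : ℝ≥0∞) :=
      biInf_le _ hq
    have hle₂ : langDist c x₂ {y | ∃ f ∈ M.accept, f ∈ M.evalFrom {q} y} ≤
        (editDist c x₂ y₂ : ℝ≥0∞) :=
      biInf_le _ ⟨f, hfacc, hfq⟩
    calc langDist c x₁ {y | q ∈ M.eval y} +
          langDist c x₂ {y | ∃ f ∈ M.accept, f ∈ M.evalFrom {q} y}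
        ≤ (editDist c x₁ y₁ : ℝ≥0∞) + editDist c x₂ y₂ := add_le_add hle₁ hle₂
      _ ≤ (alignCost c ω₁ : ℝ≥0∞) + alignCost c ω₂ :=
          add_le_add (ENNReal.coe_le_coe.2 (editDist_le_alignCost hA₁))
            (ENNReal.coe_le_coe.2 (editDist_le_alignCost hA₂))
      _ = (alignCost c (ω₁ ++ ω₂) : ℝ≥0∞) := by rw [alignCost_append]; push_cast; ring
end
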